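/- Let A be a symmetric positive definite real 2×2 matrix and let a₀ > 0. Then there exists a constant C > 0 such that for every integer m ≥ 1 and every real a with a₀ ≤ a ≤ 3a₀, one has |∑_{x ∈ ℤ², |x| ≤ a·m} exp(−⟨A⁻¹x, x⟩/(2m)) − 2π m √(det A)| ≤ C √m, where |x| denotes the Euclidean norm of x and ⟨·,·⟩ the standard inner product on ℝ². -/

import Mathlib

open MeasureTheory Real Matrix

section AuxGauss
open Set Filter Topology

lemma gaussAnti {β : ℝ} (hβ : 0 < β) {s t : ℝ} (hs : 0 ≤ s) :
    AntitoneOn (fun x : ℝ => Real.exp (-β * x ^ 2)) (Set.Icc s t) := by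
  intro a ha b hb hab
  have h2 : a ^ 2 ≤ b ^ 2 := by nlinarith [ha.1]
  have : -β * b ^ 2 ≤ -β * a ^ 2 := by nlinarith
  simpa using Real.exp_le_exp.2 this

lemma gauss_nat (β s : ℝ) (hβ : 0 < β) (hs : 0 ≤ s) :
    Summable (fun k : ℕ => Real.exp (-β * (s + k) ^ 2)) ∧
    Real.sqrt (π / β) / 2 - s ≤ (∑' k : ℕ, Real.exp (-β * (s + k) ^ 2)) ∧
    (∑' k : ℕ, Real.exp (-β * (s + k) ^ 2)) ≤ 1 + Real.sqrt (π / β) / 2 := by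
  set g : ℝ → ℝ := fun x => Real.exp (-β * x ^ 2) with hgdef
  have hgint : Integrable g := integrable_exp_neg_mul_sq hβ
  have hg0 : ∀ x : ℝ, 0 ≤ g x := fun x => (Real.exp_pos _).le
  have I0 : (∫ x in Set.Ioi (0:ℝ), g x) = Real.sqrt (π / β) / 2 := integral_gaussian_Ioi β
  -- upper bound for tail integrals
  have hmono : ∀ t : ℝ, 0 ≤ t → (∫ x in Set.Ioi t, g x) ≤ Real.sqrt (π / β) / 2 := by
    intro t ht
    rw [← I0]
    exact setIntegral_mono_set hgint.integrableOn (ae_of_all _ hg0)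
      (HasSubset.Subset.eventuallyLE (Set.Ioi_subset_Ioi ht))
  -- lower bound for the tail integral at s
  have Ilow : Real.sqrt (π / β) / 2 - s ≤ ∫ x in Set.Ioi s, g x := by
    have hsplit : (∫ x in Set.Ioi (0:ℝ), g x)
        = (∫ x in Set.Ioc 0 s, g x) + ∫ x in Set.Ioi s, g x := by
      rw [← MeasureTheory.setIntegral_union (Set.Ioc_disjoint_Ioi le_rfl) measurableSet_Ioi
        hgint.integrableOn hgint.integrableOn, Set.Ioc_union_Ioi_eq_Ioi hs]
    have hIoc : (∫ x in Set.Ioc 0 s, g x) ≤ s := by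
      have h1 : (∫ x in Set.Ioc 0 s, g x) ≤ ∫ _x in Set.Ioc 0 s, (1:ℝ) := by
        apply setIntegral_mono_on hgint.integrableOn (integrableOn_const (lt_top_iff_ne_top.1 ?_))
          measurableSet_Ioc
        · intro x _; exact Real.exp_le_one_iff.2 (by nlinarith [sq_nonneg x])
        · rw [Real.volume_Ioc]; exact ENNReal.ofReal_lt_top
      have h2 : (∫ _x in Set.Ioc 0 s, (1:ℝ)) = s := by
        simp [Real.volume_Ioc, ENNReal.toReal_ofReal hs, hs]
      linarith
    linarith [I0 ▸ hsplit]
  -- partial sums of the shifted sequence are bounded by the integral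
  have hanti : ∀ n : ℕ, AntitoneOn g (Set.Icc s (s + n)) := fun n => gaussAnti hβ hs
  have hupper : ∀ n : ℕ, (∑ i ∈ Finset.range n, g (s + (i + 1 : ℕ))) ≤ Real.sqrt (π / β) / 2 := by
    intro n
    have h1 := AntitoneOn.sum_le_integral (hanti n)
    have h2 : (∫ x in s..(s + n), g x) ≤ ∫ x in Set.Ioi s, g x := by
      rw [intervalIntegral.integral_of_le (by linarith [Nat.cast_nonneg (α := ℝ) n])]
      exact setIntegral_mono_set hgint.integrableOn (ae_of_all _ hg0)
        (HasSubset.Subset.eventuallyLE Set.Ioc_subset_Ioi_self)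
    linarith [hmono s hs]
  have hsum1 : Summable (fun k : ℕ => g (s + (k + 1 : ℕ))) :=
    summable_of_sum_range_le (fun n => hg0 _) hupper
  have hsum0 : Summable (fun k : ℕ => g (s + k)) := by
    exact (summable_nat_add_iff 1).1 hsum1
  refine ⟨hsum0, ?_, ?_⟩
  · -- lower bound
    have hlim : Tendsto (fun n : ℕ => ∫ x in s..(s + n), g x) atTop
        (𝓝 (∫ x in Set.Ioi s, g x)) :=
      intervalIntegral_tendsto_integral_Ioi s hgint.integrableOn
        (tendsto_atTop_add_const_left _ s tendsto_natCast_atTop_atTop)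
    have hle : (∫ x in Set.Ioi s, g x) ≤ ∑' k : ℕ, g (s + k) := by
      refine le_of_tendsto hlim (Filter.Eventually.of_forall fun n => ?_)
      exact (AntitoneOn.integral_le_sum (hanti n)).trans
        (Summable.sum_le_tsum (Finset.range n) (fun i _ => hg0 _) hsum0)
    exact le_trans Ilow hle
  · -- upper bound
    have h0 : (∑' k : ℕ, g (s + k)) = g (s + (0:ℕ)) + ∑' k : ℕ, g (s + (k + 1 : ℕ)) := by
      rw [Summable.tsum_eq_zero_add hsum0]
    have hg1 : g (s + (0:ℕ)) ≤ 1 := by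
      simp only [Nat.cast_zero, add_zero]
      exact Real.exp_le_one_iff.2 (by nlinarith [sq_nonneg s])
    have htail : (∑' k : ℕ, g (s + (k + 1 : ℕ))) ≤ Real.sqrt (π / β) / 2 :=
      Real.tsum_le_of_sum_range_le (fun n => hg0 _) hupper
    have : (∑' k : ℕ, g (s + k)) ≤ g (s + (0:ℕ)) + Real.sqrt (π / β) / 2 := by
      rw [h0]; linarith
    linarith

lemma gauss_int (β μ : ℝ) (hβ : 0 < β) :
    Summable (fun n : ℤ => Real.exp (-β * ((n : ℝ) + μ) ^ 2)) ∧
    |(∑' n : ℤ, Real.exp (-β * ((n : ℝ) + μ) ^ 2)) - Real.sqrt (π / β)| ≤ 2 := by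
  set u : ℤ → ℝ := fun n => Real.exp (-β * ((n : ℝ) + μ) ^ 2) with hu
  set n₀ : ℤ := ⌈-μ⌉ with hn₀
  set s : ℝ := (n₀ : ℝ) + μ with hsdef
  have hs0 : 0 ≤ s := by
    have := Int.le_ceil (-μ); rw [hsdef]; linarith
  have hs1 : s ≤ 1 := by
    have := Int.ceil_lt_add_one (-μ); rw [hsdef]; linarith
  set v : ℤ → ℝ := fun n => u (n + n₀) with hv
  have h1 : ∀ k : ℕ, v (k : ℤ) = Real.exp (-β * (s + k) ^ 2) := by
    intro k
    simp only [hv, hu, hsdef]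
    congr 1
    push_cast
    ring
  have h2 : ∀ k : ℕ, v (-((k : ℤ) + 1)) = Real.exp (-β * ((1 - s) + k) ^ 2) := by
    intro k
    simp only [hv, hu, hsdef]
    congr 1
    push_cast
    ring
  obtain ⟨S1, L1, U1⟩ := gauss_nat β s hβ hs0
  obtain ⟨S2, L2, U2⟩ := gauss_nat β (1 - s) hβ (by linarith)
  have hvp : Summable (fun k : ℕ => v (k : ℤ)) := by
    rw [funext h1]; exact S1
  have hvn : Summable (fun k : ℕ => v (-((k : ℤ) + 1))) := by
    rw [funext h2]; exact S2
  have hvsum : Summable v := Summable.of_nat_of_neg_add_one hvp hvn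
  have htv : (∑' n : ℤ, v n) = (∑' k : ℕ, v (k : ℤ)) + ∑' k : ℕ, v (-((k : ℤ) + 1)) :=
    tsum_of_nat_of_neg_add_one hvp hvn
  have husum : Summable u := by
    have : v = u ∘ (Equiv.addRight n₀) := rfl
    exact (Equiv.summable_iff (Equiv.addRight n₀)).1 (this ▸ hvsum)
  have htu : (∑' n : ℤ, u n) = ∑' n : ℤ, v n := ((Equiv.addRight n₀).tsum_eq u).symm
  have hT1 : (∑' k : ℕ, v (k : ℤ)) = ∑' k : ℕ, Real.exp (-β * (s + k) ^ 2) := by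
    rw [funext h1]
  have hT2 : (∑' k : ℕ, v (-((k : ℤ) + 1))) = ∑' k : ℕ, Real.exp (-β * ((1 - s) + k) ^ 2) := by
    rw [funext h2]
  refine ⟨husum, ?_⟩
  rw [htu, htv, hT1, hT2, abs_le]
  constructor <;> linarith

end AuxGauss

set_option maxHeartbeats 1000000 in
/-- Series–integral comparison estimate (equation (clef)): for a symmetric positive
definite real 2×2 matrix `A` and `a₀ > 0`, the lattice Gaussian sum over points of
norm at most `a·m` equals `2π m √(det A)` up to an error `O(√m)`, uniformly in
`a ∈ [a₀, 3a₀]`. -/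
theorem gaussian_lattice_sum_estimate
    (A : Matrix (Fin 2) (Fin 2) ℝ) (hA : A.PosDef) (a₀ : ℝ) (ha₀ : 0 < a₀) :
    ∃ C > 0, ∀ m : ℕ, 1 ≤ m → ∀ a : ℝ, a₀ ≤ a → a ≤ 3 * a₀ →
      |(∑' x : ℤ × ℤ,
          if (x.1 : ℝ) ^ 2 + (x.2 : ℝ) ^ 2 ≤ (a * m) ^ 2 then
            Real.exp (-(A⁻¹.mulVec ![(x.1 : ℝ), (x.2 : ℝ)] ⬝ᵥ ![(x.1 : ℝ), (x.2 : ℝ)])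
              / (2 * m))
          else 0)
        - 2 * Real.pi * m * Real.sqrt A.det| ≤ C * Real.sqrt m := by
  classical
  set M := A⁻¹ with hMdef
  have hM : M.PosDef := hA.inv
  have hq10 : M 1 0 = M 0 1 := by
    have h := hM.1
    have h2 := congrFun (congrFun h 1) 0
    simpa [Matrix.conjTranspose_apply] using h2.symm
  have hdot : ∀ x y : ℝ, M.mulVec ![x, y] ⬝ᵥ ![x, y]
      = M 0 0 * x ^ 2 + 2 * M 0 1 * x * y + M 1 1 * y ^ 2 := by
    intro x y
    simp [Matrix.mulVec, dotProduct, Fin.sum_univ_two, hq10]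
    ring
  have hdet2 : M.det = M 0 0 * M 1 1 - M 0 1 * M 0 1 := by
    rw [Matrix.det_fin_two, hq10]
  have hp : (0:ℝ) < M 0 0 := by
    have hne : (![1, 0] : Fin 2 → ℝ) ≠ 0 := by
      intro h; have := congrFun h 0; simp at this
    have h := hM.dotProduct_mulVec_pos hne
    simpa [Matrix.mulVec, dotProduct, Fin.sum_univ_two] using h
  have hr : (0:ℝ) < M 1 1 := by
    have hne : (![0, 1] : Fin 2 → ℝ) ≠ 0 := by
      intro h; have := congrFun h 1; simp at this
    have h := hM.dotProduct_mulVec_pos hne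
    simpa [Matrix.mulVec, dotProduct, Fin.sum_univ_two] using h
  have hdet : 0 < M.det := hM.det_pos
  have hdetA : 0 < A.det := hA.det_pos
  have hAdet : A.det = (M.det)⁻¹ := by
    rw [hMdef, Matrix.det_nonsing_inv, Ring.inverse_eq_inv]
    rw [inv_inv]
  set p := M 0 0 with hpdef
  set q := M 0 1 with hqdef
  set r := M 1 1 with hrdef
  set c' : ℝ := M.det / r with hc'def
  have hc' : 0 < c' := div_pos hdet hr
  have hpr : 0 < p + r := by linarith
  set lam : ℝ := M.det / (p + r) with hlamdef
  have hlam : 0 < lam := div_pos hdet hpr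
  have key : ∀ x y : ℝ, lam * (x ^ 2 + y ^ 2) ≤ p * x ^ 2 + 2 * q * x * y + r * y ^ 2 := by
    intro x y
    rw [hlamdef, hdet2, div_mul_eq_mul_div, div_le_iff₀ hpr]
    nlinarith [sq_nonneg (p * x + q * y), sq_nonneg (q * x + r * y)]
  clear_value lam c' r q p M
  set c₁ : ℝ := Real.sqrt (2 * π / c') with hc₁def
  set c₂ : ℝ := Real.sqrt (2 * π / r) with hc₂def
  set c₃ : ℝ := Real.sqrt (4 * π / lam) + 2 with hc₃def
  set Ctail : ℝ := c₃ ^ 2 * (4 / (lam * a₀ ^ 2)) with hCtaildef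
  have hc₁0 : 0 ≤ c₁ := Real.sqrt_nonneg _
  have hc₂0 : 0 ≤ c₂ := Real.sqrt_nonneg _
  have hc₃0 : 0 ≤ c₃ := by rw [hc₃def]; positivity
  have hCtail0 : 0 ≤ Ctail := by
    rw [hCtaildef]
    exact mul_nonneg (sq_nonneg _) (div_pos (by norm_num) (mul_pos hlam (pow_pos ha₀ 2))).le
  refine ⟨2 * c₁ + 2 * c₂ + 4 + Ctail, by linarith, ?_⟩
  intro m hm a ha _ha3
  set N : ℝ := (m : ℝ) with hNdef
  have hN1 : 1 ≤ N := by rw [hNdef]; exact_mod_cast hm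
  have hN0 : 0 < N := by linarith
  have hsN : 1 ≤ Real.sqrt N := by
    rw [show (1:ℝ) = Real.sqrt 1 from Real.sqrt_one.symm]
    exact Real.sqrt_le_sqrt hN1
  have hsN0 : 0 ≤ Real.sqrt N := Real.sqrt_nonneg N
  set β₁ : ℝ := c' / (2 * N) with hβ₁def
  set β₂ : ℝ := r / (2 * N) with hβ₂def
  set δ : ℝ := lam / (4 * N) with hδdef
  have hβ₁ : 0 < β₁ := div_pos hc' (by linarith)
  have hβ₂ : 0 < β₂ := div_pos hr (by linarith)
  have hδ : 0 < δ := div_pos hlam (by linarith)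
  set f : ℤ × ℤ → ℝ := fun z =>
    Real.exp (-β₁ * (z.1 : ℝ) ^ 2) *
      Real.exp (-β₂ * ((z.2 : ℝ) + q * (z.1 : ℝ) / r) ^ 2) with hfdef
  have hfQ : ∀ z : ℤ × ℤ, f z = Real.exp
      (-(p * (z.1:ℝ) ^ 2 + 2 * q * (z.1:ℝ) * (z.2:ℝ) + r * (z.2:ℝ) ^ 2) / (2 * N)) := by
    intro z
    rw [hfdef]
    dsimp only
    rw [← Real.exp_add]
    congr 1
    rw [hβ₁def, hβ₂def, hc'def, hdet2]
    field_simp [hr.ne', hN0.ne']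
    ring
  have hstmt : ∀ z : ℤ × ℤ, Real.exp
      (-(M.mulVec ![(z.1 : ℝ), (z.2 : ℝ)] ⬝ᵥ ![(z.1 : ℝ), (z.2 : ℝ)]) / (2 * N)) = f z := by
    intro z
    rw [hdot, hfQ z]
  -- inner sums over the second coordinate
  have hin : ∀ x : ℤ, Summable (fun y : ℤ => Real.exp (-β₂ * ((y:ℝ) + q * (x:ℝ) / r) ^ 2)) :=
    fun x => (gauss_int β₂ (q * (x:ℝ) / r) hβ₂).1
  set K₂ : ℝ := Real.sqrt (π / β₂) with hK₂def
  set K₁ : ℝ := Real.sqrt (π / β₁) with hK₁def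
  have hK₂0 : 0 ≤ K₂ := Real.sqrt_nonneg _
  set I : ℤ → ℝ := fun x => ∑' y : ℤ, Real.exp (-β₂ * ((y:ℝ) + q * (x:ℝ) / r) ^ 2) with hIdef
  have hI : ∀ x : ℤ, |I x - K₂| ≤ 2 := fun x => (gauss_int β₂ (q * (x:ℝ) / r) hβ₂).2
  have hInn : ∀ x : ℤ, 0 ≤ I x := fun x => tsum_nonneg (fun y => (Real.exp_pos _).le)
  have hIub : ∀ x : ℤ, I x ≤ K₂ + 2 := fun x => by linarith [(abs_le.1 (hI x)).2]
  set G : ℤ → ℝ := fun x => Real.exp (-β₁ * (x:ℝ) ^ 2) with hGdef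
  have hG0 : ∀ x, 0 ≤ G x := fun x => (Real.exp_pos _).le
  have hGsum : Summable G := by
    rw [hGdef]; simpa using (gauss_int β₁ 0 hβ₁).1
  have hGK : |(∑' x : ℤ, G x) - K₁| ≤ 2 := by
    rw [hGdef, hK₁def]; simpa using (gauss_int β₁ 0 hβ₁).2
  have hfnn : ∀ z : ℤ × ℤ, 0 ≤ f z := by
    intro z; rw [hfdef]; positivity
  have hfin : ∀ x : ℤ, Summable (fun y : ℤ => f (x, y)) := by
    intro x
    have he : (fun y : ℤ => f (x, y))
        = fun y : ℤ => Real.exp (-β₁ * (x:ℝ) ^ 2)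
          * Real.exp (-β₂ * ((y:ℝ) + q * (x:ℝ) / r) ^ 2) := by rw [hfdef]
    rw [he]
    exact (hin x).mul_left _
  have hfmarg : ∀ x : ℤ, (∑' y : ℤ, f (x, y)) = G x * I x := by
    intro x
    have he : (fun y : ℤ => f (x, y))
        = fun y : ℤ => Real.exp (-β₁ * (x:ℝ) ^ 2)
          * Real.exp (-β₂ * ((y:ℝ) + q * (x:ℝ) / r) ^ 2) := by rw [hfdef]
    rw [he, hGdef, hIdef]
    exact tsum_mul_left
  have hGIsum : Summable (fun x : ℤ => G x * I x) := by
    apply Summable.of_nonneg_of_le (fun x => mul_nonneg (hG0 x) (hInn x))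
      (fun x => mul_le_mul_of_nonneg_left (hIub x) (hG0 x))
    exact hGsum.mul_right (K₂ + 2)
  have hfsum : Summable f := by
    refine (summable_prod_of_nonneg hfnn).2 ⟨hfin, ?_⟩
    rw [funext hfmarg]
    exact hGIsum
  set S : ℝ := ∑' z : ℤ × ℤ, f z with hSdef
  set S₁ : ℝ := ∑' x : ℤ, G x with hS₁def
  have hS₁0 : 0 ≤ S₁ := by rw [hS₁def]; exact tsum_nonneg hG0
  have hS₁ub : S₁ ≤ K₁ + 2 := by linarith [(abs_le.1 hGK).2]
  have hSfact : S = ∑' x : ℤ, G x * I x := by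
    rw [hSdef, Summable.tsum_prod' hfsum hfin]
    exact tsum_congr hfmarg
  have hKGsum : Summable (fun x : ℤ => K₂ * G x) := hGsum.mul_left K₂
  have hGIK : ∀ x : ℤ, |G x * I x - K₂ * G x| ≤ 2 * G x := by
    intro x
    have he : G x * I x - K₂ * G x = G x * (I x - K₂) := by ring
    rw [he, abs_mul, abs_of_nonneg (hG0 x)]
    calc G x * |I x - K₂| ≤ G x * 2 := mul_le_mul_of_nonneg_left (hI x) (hG0 x)
    _ = 2 * G x := by ring
  have habs_sum : Summable (fun x : ℤ => |G x * I x - K₂ * G x|) :=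
    Summable.of_nonneg_of_le (fun x => abs_nonneg _) hGIK (hGsum.mul_left 2)
  have hdiff1 : |S - K₂ * S₁| ≤ 2 * S₁ := by
    have h1 : S - K₂ * S₁ = ∑' x : ℤ, (G x * I x - K₂ * G x) := by
      rw [hSfact, hS₁def, ← tsum_mul_left]
      exact (Summable.tsum_sub hGIsum hKGsum).symm
    rw [h1]
    calc |∑' x : ℤ, (G x * I x - K₂ * G x)| ≤ ∑' x : ℤ, |G x * I x - K₂ * G x| := by
          simpa [Real.norm_eq_abs] using
            norm_tsum_le_tsum_norm (f := fun x : ℤ => G x * I x - K₂ * G x)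
              (by simpa [Real.norm_eq_abs] using habs_sum)
      _ ≤ ∑' x : ℤ, 2 * G x := Summable.tsum_le_tsum hGIK habs_sum (hGsum.mul_left 2)
      _ = 2 * S₁ := by rw [tsum_mul_left, hS₁def]
  have hprodK : K₂ * K₁ = 2 * π * N * Real.sqrt A.det := by
    rw [hK₂def, hK₁def, ← Real.sqrt_mul (div_nonneg pi_pos.le hβ₂.le)]
    have harg : π / β₂ * (π / β₁) = (2 * π * N) ^ 2 * A.det := by
      rw [hβ₂def, hβ₁def, hc'def, hAdet]
      field_simp [hr.ne', hN0.ne', hdet.ne']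
    rw [harg, Real.sqrt_mul (sq_nonneg _), Real.sqrt_sq
      (mul_nonneg (mul_nonneg (by norm_num) Real.pi_pos.le) hN0.le)]
  have hK₁val : K₁ = c₁ * Real.sqrt N := by
    rw [hK₁def, hc₁def, ← Real.sqrt_mul (div_nonneg (mul_nonneg (by norm_num) Real.pi_pos.le) hc'.le)]
    congr 1
    rw [hβ₁def]
    field_simp [hc'.ne', hN0.ne']
  have hK₂val : K₂ = c₂ * Real.sqrt N := by
    rw [hK₂def, hc₂def, ← Real.sqrt_mul (div_nonneg (mul_nonneg (by norm_num) Real.pi_pos.le) hr.le)]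
    congr 1
    rw [hβ₂def]
    field_simp [hr.ne', hN0.ne']
  have hmain : |S - 2 * π * N * Real.sqrt A.det| ≤ (2 * c₁ + 2 * c₂ + 4) * Real.sqrt N := by
    rw [← hprodK]
    have h2 : |K₂ * S₁ - K₂ * K₁| = K₂ * |S₁ - K₁| := by
      rw [← mul_sub, abs_mul, abs_of_nonneg hK₂0]
    calc |S - K₂ * K₁| ≤ |S - K₂ * S₁| + |K₂ * S₁ - K₂ * K₁| := abs_sub_le _ _ _
      _ ≤ 2 * S₁ + K₂ * 2 := by
          rw [h2]
          exact add_le_add hdiff1 (mul_le_mul_of_nonneg_left hGK hK₂0)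
      _ ≤ 2 * (K₁ + 2) + 2 * K₂ := by linarith
      _ = 2 * (c₁ * Real.sqrt N) + 4 + 2 * (c₂ * Real.sqrt N) := by
          rw [hK₁val, hK₂val]; ring
      _ ≤ (2 * c₁ + 2 * c₂ + 4) * Real.sqrt N := by
          rw [show (2 * c₁ + 2 * c₂ + 4) * Real.sqrt N
            = 2 * (c₁ * Real.sqrt N) + 2 * (c₂ * Real.sqrt N) + 4 * Real.sqrt N by ring]
          have h4 : (4:ℝ) ≤ 4 * Real.sqrt N := by linarith
          linarith
  -- truncation
  set gf : ℤ × ℤ → ℝ := fun z =>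
    if (z.1:ℝ) ^ 2 + (z.2:ℝ) ^ 2 ≤ (a * N) ^ 2 then f z else 0 with hgfdef
  have hgnn : ∀ z, 0 ≤ gf z := by
    intro z; rw [hgfdef]; dsimp only; split_ifs
    · exact hfnn z
    · exact le_rfl
  have hgle : ∀ z, gf z ≤ f z := by
    intro z; rw [hgfdef]; dsimp only; split_ifs
    · exact le_rfl
    · exact hfnn z
  have hgsum : Summable gf := Summable.of_nonneg_of_le hgnn hgle hfsum
  set K0 : ℝ := Real.exp (-(lam * a₀ ^ 2 / 4) * N) with hK0def
  have hK00 : 0 ≤ K0 := (Real.exp_pos _).le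
  set φ : ℤ → ℝ := fun n => Real.exp (-δ * (n:ℝ) ^ 2) with hφdef
  have hφnn : ∀ n, 0 ≤ φ n := fun n => (Real.exp_pos _).le
  have hφsum : Summable φ := by rw [hφdef]; simpa using (gauss_int δ 0 hδ).1
  have hφub : (∑' n : ℤ, φ n) ≤ c₃ * Real.sqrt N := by
    have h := (gauss_int δ 0 hδ).2
    simp only [add_zero] at h
    have h2 : Real.sqrt (π / δ) = Real.sqrt (4 * π / lam) * Real.sqrt N := by
      rw [← Real.sqrt_mul (div_nonneg (mul_nonneg (by norm_num) Real.pi_pos.le) hlam.le)]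
      congr 1
      rw [hδdef]
      field_simp
    have h3 := (abs_le.1 h).2
    have h4 : (∑' n : ℤ, φ n) = ∑' n : ℤ, Real.exp (-δ * (n:ℝ) ^ 2) := by rw [hφdef]
    have h5 : (2:ℝ) ≤ 2 * Real.sqrt N := by linarith
    rw [h4]
    calc (∑' n : ℤ, Real.exp (-δ * (n:ℝ) ^ 2)) ≤ Real.sqrt (π / δ) + 2 := by linarith
      _ = Real.sqrt (4 * π / lam) * Real.sqrt N + 2 := by rw [h2]
      _ ≤ Real.sqrt (4 * π / lam) * Real.sqrt N + 2 * Real.sqrt N := by linarith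
      _ = c₃ * Real.sqrt N := by rw [hc₃def]; ring
  have hφnorm : Summable (fun n : ℤ => ‖φ n‖) := by
    simpa only [Real.norm_eq_abs] using summable_abs_iff.2 hφsum
  have hprodsum : Summable (fun z : ℤ × ℤ => φ z.1 * φ z.2) :=
    summable_mul_of_summable_norm hφnorm hφnorm
  have hprodtsum : (∑' z : ℤ × ℤ, φ z.1 * φ z.2) = (∑' n : ℤ, φ n) * ∑' n : ℤ, φ n :=
    (tsum_mul_tsum_of_summable_norm hφnorm hφnorm).symm
  have htailpt : ∀ z : ℤ × ℤ, f z - gf z ≤ K0 * (φ z.1 * φ z.2) := by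
    intro z
    rw [hgfdef]
    dsimp only
    split_ifs with hcond
    · rw [sub_self]
      exact mul_nonneg hK00 (mul_nonneg (hφnn _) (hφnn _))
    · rw [sub_zero]
      push_neg at hcond
      have hxy : a₀ ^ 2 * N ^ 2 ≤ (z.1:ℝ) ^ 2 + (z.2:ℝ) ^ 2 := by
        have h1 : a₀ * N ≤ a * N := mul_le_mul_of_nonneg_right ha hN0.le
        have h2 : (a₀ * N) ^ 2 ≤ (a * N) ^ 2 :=
          pow_le_pow_left₀ (mul_nonneg ha₀.le hN0.le) h1 2
        have h3 : (a₀ * N) ^ 2 = a₀ ^ 2 * N ^ 2 := by ring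
        linarith
      have h2N : (0:ℝ) < 2 * N := by linarith
      have h1 : f z ≤ Real.exp (-(lam * ((z.1:ℝ) ^ 2 + (z.2:ℝ) ^ 2)) / (2 * N)) := by
        rw [hfQ z]
        apply Real.exp_le_exp.2
        exact (div_le_div_iff_of_pos_right h2N).2 (neg_le_neg (key _ _))
      have h2s : Real.exp (-(lam * ((z.1:ℝ) ^ 2 + (z.2:ℝ) ^ 2)) / (2 * N))
          = Real.exp (-(lam * ((z.1:ℝ) ^ 2 + (z.2:ℝ) ^ 2)) / (4 * N))
            * Real.exp (-(lam * ((z.1:ℝ) ^ 2 + (z.2:ℝ) ^ 2)) / (4 * N)) := by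
        rw [← Real.exp_add]
        congr 1
        field_simp
        ring
      have h3 : Real.exp (-(lam * ((z.1:ℝ) ^ 2 + (z.2:ℝ) ^ 2)) / (4 * N)) ≤ K0 := by
        rw [hK0def]
        apply Real.exp_le_exp.2
        rw [div_le_iff₀ (by linarith : (0:ℝ) < 4 * N)]
        have h5 : lam * (a₀ ^ 2 * N ^ 2) ≤ lam * ((z.1:ℝ) ^ 2 + (z.2:ℝ) ^ 2) :=
          mul_le_mul_of_nonneg_left hxy hlam.le
        rw [show -(lam * a₀ ^ 2 / 4) * N * (4 * N) = -(lam * (a₀ ^ 2 * N ^ 2)) by ring]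
        linarith
      have h4 : Real.exp (-(lam * ((z.1:ℝ) ^ 2 + (z.2:ℝ) ^ 2)) / (4 * N)) = φ z.1 * φ z.2 := by
        rw [hφdef]
        dsimp only
        rw [← Real.exp_add]
        congr 1
        rw [hδdef]
        field_simp
        ring
      calc f z ≤ Real.exp (-(lam * ((z.1:ℝ) ^ 2 + (z.2:ℝ) ^ 2)) / (2 * N)) := h1
        _ = Real.exp (-(lam * ((z.1:ℝ) ^ 2 + (z.2:ℝ) ^ 2)) / (4 * N))
            * Real.exp (-(lam * ((z.1:ℝ) ^ 2 + (z.2:ℝ) ^ 2)) / (4 * N)) := h2s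
        _ ≤ K0 * (φ z.1 * φ z.2) :=
            mul_le_mul h3 (le_of_eq h4) (Real.exp_pos _).le hK00
  have hsubsum : Summable (fun z : ℤ × ℤ => f z - gf z) := hfsum.sub hgsum
  have hdiffeq : S - (∑' z : ℤ × ℤ, gf z) = ∑' z : ℤ × ℤ, (f z - gf z) := by
    rw [hSdef]
    exact (Summable.tsum_sub hfsum hgsum).symm
  have htail : S - (∑' z : ℤ × ℤ, gf z) ≤ Ctail := by
    have h2 : (∑' z : ℤ × ℤ, (f z - gf z)) ≤ ∑' z : ℤ × ℤ, K0 * (φ z.1 * φ z.2) :=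
      Summable.tsum_le_tsum htailpt hsubsum (hprodsum.mul_left K0)
    have h3 : (∑' z : ℤ × ℤ, K0 * (φ z.1 * φ z.2))
        = K0 * ((∑' n : ℤ, φ n) * ∑' n : ℤ, φ n) := by
      rw [tsum_mul_left, hprodtsum]
    have hφ0 : 0 ≤ ∑' n : ℤ, φ n := tsum_nonneg hφnn
    have h5 : K0 * ((∑' n : ℤ, φ n) * ∑' n : ℤ, φ n)
        ≤ K0 * ((c₃ * Real.sqrt N) * (c₃ * Real.sqrt N)) := by
      apply mul_le_mul_of_nonneg_left _ hK00
      exact mul_le_mul hφub hφub hφ0 (mul_nonneg hc₃0 hsN0)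
    have h6 : K0 * ((c₃ * Real.sqrt N) * (c₃ * Real.sqrt N)) = c₃ ^ 2 * (N * K0) := by
      rw [show (c₃ * Real.sqrt N) * (c₃ * Real.sqrt N)
        = c₃ ^ 2 * (Real.sqrt N * Real.sqrt N) by ring, Real.mul_self_sqrt hN0.le]
      ring
    have hNK0 : N * K0 ≤ 4 / (lam * a₀ ^ 2) := by
      rw [hK0def, show -(lam * a₀ ^ 2 / 4) * N = -(lam * a₀ ^ 2 / 4 * N) by ring, Real.exp_neg,
        ← div_eq_mul_inv, div_le_div_iff₀ (Real.exp_pos _) (mul_pos hlam (pow_pos ha₀ 2))]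
      have hge := Real.add_one_le_exp (lam * a₀ ^ 2 / 4 * N)
      have hE0 := (Real.exp_pos (lam * a₀ ^ 2 / 4 * N)).le
      linarith
    have h7 : c₃ ^ 2 * (N * K0) ≤ c₃ ^ 2 * (4 / (lam * a₀ ^ 2)) :=
      mul_le_mul_of_nonneg_left hNK0 (sq_nonneg _)
    rw [hCtaildef]
    calc S - (∑' z : ℤ × ℤ, gf z) = ∑' z : ℤ × ℤ, (f z - gf z) := hdiffeq
      _ ≤ ∑' z : ℤ × ℤ, K0 * (φ z.1 * φ z.2) := h2
      _ = K0 * ((∑' n : ℤ, φ n) * ∑' n : ℤ, φ n) := h3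
      _ ≤ K0 * ((c₃ * Real.sqrt N) * (c₃ * Real.sqrt N)) := h5
      _ = c₃ ^ 2 * (N * K0) := h6
      _ ≤ c₃ ^ 2 * (4 / (lam * a₀ ^ 2)) := h7
  have htail0 : 0 ≤ S - (∑' z : ℤ × ℤ, gf z) := by
    rw [hdiffeq]
    exact tsum_nonneg (fun z => sub_nonneg.2 (hgle z))
  -- final assembly
  have hgoal : (∑' x : ℤ × ℤ,
      if (x.1 : ℝ) ^ 2 + (x.2 : ℝ) ^ 2 ≤ (a * N) ^ 2 then
        Real.exp (-(M.mulVec ![(x.1 : ℝ), (x.2 : ℝ)] ⬝ᵥ ![(x.1 : ℝ), (x.2 : ℝ)]) / (2 * N))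
      else 0) = ∑' z : ℤ × ℤ, gf z := by
    apply tsum_congr
    intro z
    rw [hgfdef]
    dsimp only
    exact if_congr Iff.rfl (hstmt z) rfl
  rw [hgoal]
  have habs : |(∑' z : ℤ × ℤ, gf z) - S| ≤ Ctail := by
    rw [abs_sub_comm, abs_of_nonneg htail0]
    exact htail
  calc |(∑' z : ℤ × ℤ, gf z) - 2 * π * N * Real.sqrt A.det|
      ≤ |(∑' z : ℤ × ℤ, gf z) - S| + |S - 2 * π * N * Real.sqrt A.det| := abs_sub_le _ _ _
    _ ≤ Ctail + (2 * c₁ + 2 * c₂ + 4) * Real.sqrt N := add_le_add habs hmain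
    _ ≤ (2 * c₁ + 2 * c₂ + 4 + Ctail) * Real.sqrt N := by
        have h8 : Ctail ≤ Ctail * Real.sqrt N := le_mul_of_one_le_right hCtail0 hsN
        rw [show (2 * c₁ + 2 * c₂ + 4 + Ctail) * Real.sqrt N
          = (2 * c₁ + 2 * c₂ + 4) * Real.sqrt N + Ctail * Real.sqrt N by ring]
        linarith
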